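/- Let 𝔤 = 𝔤₁ ⊕ 𝒱₀ be a stratified nilpotent Lie algebra with 𝒱₀ = 𝔤₂ ⊕ … ⊕ 𝔤_m, and let 𝒱_ℓ = {X + ℓ(X) : X ∈ 𝒱₀} for a linear map ℓ : 𝒱₀ → 𝔤₁, with associated projection π_ℓ : 𝔤 → 𝒱_ℓ along 𝔤₁. Then tr(π_ℓ ∘ ad_{X_i} ∘ π_ℓ) = tr(ℓ ∘ ad_{X_i}) for all X_i ∈ 𝔤₁; consequently the complement 𝒱_ℓ satisfies the compatibility condition tr(π_ℓ ∘ ad_{X_i} ∘ π_ℓ) = 0 for all i if and only if tr(ℓ ∘ ad_{X_i}) = 0 for all i. -/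

import Mathlib

/-- Let `𝔤 = 𝔤₁ ⊕ 𝒱₀` be a stratified nilpotent Lie algebra
with `𝒱₀ = 𝔤₂ ⊕ … ⊕ 𝔤_m`, and let `𝒱_ℓ = {X + ℓ(X) : X ∈ 𝒱₀}` for a linear map
`ℓ : 𝒱₀ → 𝔤₁` (extended by `0` on `𝔤₁`), with associated projection
`π_ℓ = π₀ + ℓ ∘ π₀ : 𝔤 → 𝒱_ℓ` along `𝔤₁`.  Then
`tr(π_ℓ ∘ ad_X ∘ π_ℓ) = tr(ℓ ∘ ad_X)` for every `X ∈ 𝔤₁`; consequently `𝒱_ℓ`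
satisfies the compatibility condition `tr(π_ℓ ∘ ad_X ∘ π_ℓ) = 0` for all
`X ∈ 𝔤₁` if and only if `tr(ℓ ∘ ad_X) = 0` for all `X ∈ 𝔤₁`. -/
theorem trace_graph_projection_eq_trace_ell
    (L : Type*) [LieRing L] [LieAlgebra ℝ L] [FiniteDimensional ℝ L]
    (m : ℕ) (G : ℕ → Submodule ℝ L)
    (hG0 : G 0 = ⊥) (hGtop : ∀ j, m < j → G j = ⊥)
    (hinternal : DirectSum.IsInternal G)
    (hstrat : ∀ x ∈ G 1, ∀ (j : ℕ), ∀ y ∈ G j, ⁅x, y⁆ ∈ G (j + 1))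
    (hspan : ∀ j, 1 ≤ j →
      G (j + 1) = Submodule.span ℝ {z : L | ∃ x ∈ G 1, ∃ y ∈ G j, z = ⁅x, y⁆})
    (V₀ : Submodule ℝ L) (hV₀ : V₀ = ⨆ j ∈ Set.Ici 2, G j)
    (π₀ : L →ₗ[ℝ] L)
    (hπ1 : ∀ v ∈ V₀, π₀ v = v) (hπ2 : ∀ v ∈ G 1, π₀ v = 0)
    (ℓ : L →ₗ[ℝ] L) (hℓ1 : ∀ v, ℓ v ∈ G 1) (hℓ2 : ∀ v ∈ G 1, ℓ v = 0)
    (πℓ : L →ₗ[ℝ] L) (hπℓ : πℓ = π₀ + ℓ ∘ₗ π₀) :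
    (∀ X ∈ G 1,
        LinearMap.trace ℝ L (πℓ ∘ₗ (LieAlgebra.ad ℝ L X : L →ₗ[ℝ] L) ∘ₗ πℓ)
          = LinearMap.trace ℝ L (ℓ ∘ₗ (LieAlgebra.ad ℝ L X : L →ₗ[ℝ] L))) ∧
    ((∀ X ∈ G 1,
        LinearMap.trace ℝ L (πℓ ∘ₗ (LieAlgebra.ad ℝ L X : L →ₗ[ℝ] L) ∘ₗ πℓ) = 0)
      ↔ (∀ X ∈ G 1,
        LinearMap.trace ℝ L (ℓ ∘ₗ (LieAlgebra.ad ℝ L X : L →ₗ[ℝ] L)) = 0)) := by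
  have htop : (⨆ j, G j) = ⊤ := hinternal.submodule_iSup_eq_top
  have hGle : ∀ j, 2 ≤ j → G j ≤ V₀ := by
    intro j hj
    rw [hV₀]
    exact le_iSup₂ (f := fun j _ => G j) j (Set.mem_Ici.mpr hj)
  -- decomposition L = G 1 ⊔ V₀
  have hle : (⨆ j, G j) ≤ G 1 ⊔ V₀ := by
    refine iSup_le fun j => ?_
    match j with
    | 0 => rw [hG0]; exact bot_le
    | 1 => exact le_sup_left
    | (k+2) => exact (hGle (k+2) (by omega)).trans le_sup_right
  have hsup : G 1 ⊔ V₀ = ⊤ := le_antisymm le_top (htop ▸ hle)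
  have hdecomp : ∀ v : L, ∃ a ∈ G 1, ∃ b ∈ V₀, v = a + b := by
    intro v
    have : v ∈ G 1 ⊔ V₀ := hsup ▸ Submodule.mem_top
    obtain ⟨a, ha, b, hb, h⟩ := Submodule.mem_sup.mp this
    exact ⟨a, ha, b, hb, h.symm⟩
  have hℓπ : ℓ ∘ₗ π₀ = ℓ := by
    ext v
    obtain ⟨a, ha, b, hb, rfl⟩ := hdecomp v
    simp only [LinearMap.comp_apply, map_add, hπ1 b hb, hπ2 a ha, hℓ2 a ha, map_zero, zero_add]
  have hπℓ0 : π₀ ∘ₗ ℓ = 0 := by ext v; exact hπ2 _ (hℓ1 v)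
  have hℓℓ0 : ℓ ∘ₗ ℓ = 0 := by ext v; exact hℓ2 _ (hℓ1 v)
  have main : ∀ X ∈ G 1,
      LinearMap.trace ℝ L (πℓ ∘ₗ (LieAlgebra.ad ℝ L X : L →ₗ[ℝ] L) ∘ₗ πℓ)
        = LinearMap.trace ℝ L (ℓ ∘ₗ (LieAlgebra.ad ℝ L X : L →ₗ[ℝ] L)) := by
    intro X hX
    set A := (LieAlgebra.ad ℝ L X : L →ₗ[ℝ] L) with hA
    have hAV : ∀ v, A v ∈ V₀ := by
      intro v
      have hv : v ∈ ⨆ j, G j := htop ▸ Submodule.mem_top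
      refine Submodule.iSup_induction (motive := fun w => A w ∈ V₀) G hv
        (fun j y hy => ?_) (by show A 0 ∈ V₀; rw [map_zero]; exact V₀.zero_mem)
        (fun x y hx hy => by show A (x + y) ∈ V₀; rw [map_add]; exact V₀.add_mem hx hy)
      match j with
      | 0 =>
        rw [hG0] at hy
        show A y ∈ V₀
        rw [(Submodule.mem_bot ℝ).mp hy, map_zero]
        exact V₀.zero_mem
      | (k+1) => exact hGle (k+2) (by omega) (hstrat X hX (k+1) y hy)
    have hπA : π₀ ∘ₗ A = A := by ext v; exact hπ1 _ (hAV v)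
    have hpow : ∀ n j, ∀ y ∈ G j, (A ^ n) y ∈ G (j + n) := by
      intro n
      induction n with
      | zero => intro j y hy; simpa using hy
      | succ n ih =>
        intro j y hy
        have h1 : (A ^ (n+1)) y = A ((A ^ n) y) := by rw [pow_succ']; rfl
        rw [h1]
        exact hstrat X hX (j + n) _ (ih j y hy)
    have hnil : IsNilpotent A := by
      refine ⟨m + 1, ?_⟩
      ext v
      have hv : v ∈ ⨆ j, G j := htop ▸ Submodule.mem_top
      show (A ^ (m+1)) v = 0
      refine Submodule.iSup_induction (motive := fun w => (A ^ (m+1)) w = 0) G hv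
        (fun j y hy => ?_) (map_zero _)
        (fun x y hx hy => by show (A ^ (m+1)) (x + y) = 0; rw [map_add]; rw [hx, hy, add_zero])
      show (A ^ (m+1)) y = 0
      have := hpow (m+1) j y hy
      rw [hGtop (j + (m+1)) (by omega)] at this
      exact (Submodule.mem_bot ℝ).mp this
    have htrA : LinearMap.trace ℝ L A = 0 :=
      (LinearMap.isNilpotent_trace_of_isNilpotent hnil).eq_zero
    have e1 : πℓ = π₀ + ℓ := by rw [hπℓ, hℓπ]
    rw [e1, LinearMap.comp_add, LinearMap.add_comp, LinearMap.comp_add, LinearMap.comp_add, map_add, map_add, map_add]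
    have t1 : LinearMap.trace ℝ L (π₀ ∘ₗ A ∘ₗ π₀) = 0 := by
      rw [← LinearMap.comp_assoc, hπA, LinearMap.trace_comp_comm', hπA, htrA]
    have t2 : LinearMap.trace ℝ L (π₀ ∘ₗ A ∘ₗ ℓ) = LinearMap.trace ℝ L (ℓ ∘ₗ A) := by
      rw [← LinearMap.comp_assoc, hπA, LinearMap.trace_comp_comm']
    have t3 : LinearMap.trace ℝ L (ℓ ∘ₗ A ∘ₗ π₀) = 0 := by
      rw [LinearMap.trace_comp_comm' (A ∘ₗ π₀) ℓ, LinearMap.comp_assoc, hπℓ0,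
        LinearMap.comp_zero, map_zero]
    have t4 : LinearMap.trace ℝ L (ℓ ∘ₗ A ∘ₗ ℓ) = 0 := by
      rw [LinearMap.trace_comp_comm' (A ∘ₗ ℓ) ℓ, LinearMap.comp_assoc, hℓℓ0,
        LinearMap.comp_zero, map_zero]
    rw [t1, t2, t3, t4]
    ring
  refine ⟨main, ⟨fun h X hX => ?_, fun h X hX => ?_⟩⟩
  · rw [← main X hX]; exact h X hX
  · rw [main X hX]; exact h X hX
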